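/- Let (W_t)_{t≥0} be a C₀ contraction semigroup on a complex Hilbert space H with generator B, let K be a complex Hilbert space, and let j : D(B) → K be a linear map satisfying ⟨jψ, jφ⟩_K = −(⟨Bψ, φ⟩_H + ⟨ψ, Bφ⟩_H) for all ψ, φ ∈ D(B). Assume moreover that for every ψ ∈ D(B) and t ≥ 0 one has W_tψ ∈ D(B) and the map t ↦ W_tψ is differentiable with derivative B W_tψ. Then for every ψ ∈ D(B): (i) for all 0 ≤ t₁ ≤ t₂, ∫_{t₁}^{t₂} ‖j(W_tψ)‖²_K dt = ‖W_{t₁}ψ‖²_H − ‖W_{t₂}ψ‖²_H; (ii) the limit lim_{t→∞} ‖W_tψ‖²_H exists and ∫_0^∞ ‖j(W_tψ)‖²_K dt = ‖ψ‖²_H − lim_{t→∞} ‖W_tψ‖²_H ≤ ‖ψ‖²_H. -/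

import Mathlib

open scoped ComplexInnerProductSpace
open Filter Topology MeasureTheory

/-- Let `(W t)` be a C₀ contraction semigroup on a complex Hilbert space
`H` with generator `B` (domain `Bdom`, characterized by `hgen`/`hgenval`), let `K` be a
complex Hilbert space and `j : D(B) → K` linear with
`⟪jψ, jφ⟫ = −(⟪Bψ, φ⟫ + ⟪ψ, Bφ⟫)` for all `ψ, φ ∈ D(B)`. Assume `W t ψ ∈ D(B)` for
`ψ ∈ D(B)`, `t ≥ 0`, and `t ↦ W t ψ` is differentiable with derivative `B (W t ψ)`.
Then for every `ψ ∈ D(B)`: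
(i) `∫_{t₁}^{t₂} ‖j (W t ψ)‖² dt = ‖W t₁ ψ‖² − ‖W t₂ ψ‖²` for `0 ≤ t₁ ≤ t₂`; and
(ii) `lim_{t→∞} ‖W t ψ‖²` exists, with
`∫_0^∞ ‖j (W t ψ)‖² dt = ‖ψ‖² − lim_{t→∞} ‖W t ψ‖² ≤ ‖ψ‖²`. -/
theorem stmt_8
    {H K : Type*}
    [NormedAddCommGroup H] [InnerProductSpace ℂ H] [CompleteSpace H]
    [NormedAddCommGroup K] [InnerProductSpace ℂ K] [CompleteSpace K]
    (W : ℝ → H →L[ℂ] H)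
    (hW0 : W 0 = 1)
    (hWsemi : ∀ s t : ℝ, 0 ≤ s → 0 ≤ t → W (s + t) = (W s).comp (W t))
    (hWcont : ∀ x : H, ContinuousOn (fun t : ℝ => W t x) (Set.Ici 0))
    (hWcontr : ∀ t : ℝ, 0 ≤ t → ∀ x : H, ‖W t x‖ ≤ ‖x‖)
    (Bdom : Submodule ℂ H) (B : H →ₗ[ℂ] H)
    (hgen : ∀ x : H, x ∈ Bdom ↔
      ∃ η : H, Tendsto (fun t : ℝ => t⁻¹ • (W t x - x)) (𝓝[>] 0) (𝓝 η))
    (hgenval : ∀ x ∈ Bdom,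
      Tendsto (fun t : ℝ => t⁻¹ • (W t x - x)) (𝓝[>] 0) (𝓝 (B x)))
    (j : H →ₗ[ℂ] K)
    (hj : ∀ ψ ∈ Bdom, ∀ φ ∈ Bdom, ⟪j ψ, j φ⟫ = -(⟪B ψ, φ⟫ + ⟪ψ, B φ⟫))
    (hinv : ∀ ψ ∈ Bdom, ∀ t : ℝ, 0 ≤ t → W t ψ ∈ Bdom ∧
      HasDerivWithinAt (fun s : ℝ => W s ψ) (B (W t ψ)) (Set.Ici 0) t) :
    ∀ ψ ∈ Bdom,
      (∀ t₁ t₂ : ℝ, 0 ≤ t₁ → t₁ ≤ t₂ →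
        (∫ t in t₁..t₂, ‖j (W t ψ)‖ ^ 2) = ‖W t₁ ψ‖ ^ 2 - ‖W t₂ ψ‖ ^ 2) ∧
      ∃ L : ℝ, Tendsto (fun t : ℝ => ‖W t ψ‖ ^ 2) atTop (𝓝 L) ∧
        (∫ t in Set.Ioi (0 : ℝ), ‖j (W t ψ)‖ ^ 2) = ‖ψ‖ ^ 2 - L ∧
        (∫ t in Set.Ioi (0 : ℝ), ‖j (W t ψ)‖ ^ 2) ≤ ‖ψ‖ ^ 2 := by
  intro ψ hψ
  have hW0ψ : W 0 ψ = ψ := by rw [hW0]; rfl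
  have hmem : ∀ t : ℝ, 0 ≤ t → W t ψ ∈ Bdom := fun t ht => (hinv ψ hψ t ht).1
  have hderiv : ∀ t : ℝ, 0 ≤ t →
      HasDerivWithinAt (fun s : ℝ => W s ψ) (B (W t ψ)) (Set.Ici 0) t :=
    fun t ht => (hinv ψ hψ t ht).2
  -- B commutes with W on ψ
  have hBW : ∀ t : ℝ, 0 ≤ t → B (W t ψ) = W t (B ψ) := by
    intro t ht
    have h1 := hgenval _ (hmem t ht)
    have hc : Tendsto (fun y : H => W t y) (𝓝 (B ψ)) (𝓝 (W t (B ψ))) :=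
      (W t).continuous.tendsto _
    have h2 : Tendsto (fun s : ℝ => s⁻¹ • (W s (W t ψ) - W t ψ)) (𝓝[>] 0)
        (𝓝 (W t (B ψ))) := by
      refine (hc.comp (hgenval ψ hψ)).congr' ?_
      filter_upwards [self_mem_nhdsWithin] with s hs
      have hs' : (0 : ℝ) < s := hs
      have hcomm : W s (W t ψ) = W t (W s ψ) := by
        have e1 := hWsemi s t hs'.le ht
        have e2 := hWsemi t s ht hs'.le
        have : (W s).comp (W t) = (W t).comp (W s) := by
          rw [← e1, ← e2, add_comm]
        calc W s (W t ψ) = ((W s).comp (W t)) ψ := rfl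
          _ = ((W t).comp (W s)) ψ := by rw [this]
          _ = W t (W s ψ) := rfl
      simp only [Function.comp, hcomm, map_sub, ContinuousLinearMap.map_smul_of_tower]
    exact tendsto_nhds_unique h1 h2
  -- pointwise formula for the integrand
  have hjval : ∀ t : ℝ, 0 ≤ t →
      ‖j (W t ψ)‖ ^ 2 = -(Complex.re (⟪W t ψ, B (W t ψ)⟫ + ⟪B (W t ψ), W t ψ⟫)) := by
    intro t ht
    have h1 : (Complex.re ⟪j (W t ψ), j (W t ψ)⟫ : ℝ) = ‖j (W t ψ)‖ ^ 2 := by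
      have := inner_self_eq_norm_sq (𝕜 := ℂ) (j (W t ψ))
      simpa using this
    rw [← h1, hj _ (hmem t ht) _ (hmem t ht)]
    simp [add_comm]
  -- auxiliary continuous version of the integrand
  set G : ℝ → ℝ :=
    fun t => -(Complex.re (⟪W t ψ, W t (B ψ)⟫ + ⟪W t (B ψ), W t ψ⟫)) with hGdef
  have hGeq : ∀ t : ℝ, 0 ≤ t → ‖j (W t ψ)‖ ^ 2 = G t := by
    intro t ht
    rw [hjval t ht, hGdef]
    simp [hBW t ht]
  have hGnonneg : ∀ t : ℝ, 0 ≤ t → 0 ≤ G t := by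
    intro t ht; rw [← hGeq t ht]; positivity
  have hGcont : ContinuousOn G (Set.Ici 0) := by
    have h1 := ContinuousOn.inner (𝕜 := ℂ) (hWcont ψ) (hWcont (B ψ))
    have h2 := ContinuousOn.inner (𝕜 := ℂ) (hWcont (B ψ)) (hWcont ψ)
    exact ((Complex.continuous_re.comp_continuousOn (h1.add h2))).neg
  -- derivative of the squared norm
  have hf : ∀ t : ℝ, 0 ≤ t →
      HasDerivWithinAt (fun s : ℝ => -‖W s ψ‖ ^ 2) (G t) (Set.Ici 0) t := by
    intro t ht
    have h1 := HasDerivWithinAt.inner ℂ (hderiv t ht) (hderiv t ht)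
    have h2 := Complex.reCLM.hasFDerivAt.comp_hasDerivWithinAt t h1
    have h3 : HasDerivWithinAt (fun s : ℝ => ‖W s ψ‖ ^ 2)
        (Complex.re (⟪W t ψ, B (W t ψ)⟫ + ⟪B (W t ψ), W t ψ⟫)) (Set.Ici 0) t := by
      have e : (fun s : ℝ => ‖W s ψ‖ ^ 2) = ⇑Complex.reCLM ∘ fun s => ⟪W s ψ, W s ψ⟫ := by
        funext s
        show ‖W s ψ‖ ^ 2 = Complex.reCLM ⟪W s ψ, W s ψ⟫
        rw [Complex.reCLM_apply]
        exact (inner_self_eq_norm_sq (𝕜 := ℂ) (W s ψ)).symm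
      rw [e]
      exact h2
    have := h3.neg
    rw [hGdef]
    simpa [hBW t ht, Pi.neg_def] using this
  -- continuity of squared norm
  have hncont : ContinuousOn (fun t : ℝ => ‖W t ψ‖ ^ 2) (Set.Ici 0) :=
    ((hWcont ψ).norm).pow 2
  -- part (i) for G
  have keyG : ∀ t₁ t₂ : ℝ, 0 ≤ t₁ → t₁ ≤ t₂ →
      (∫ t in t₁..t₂, G t) = ‖W t₁ ψ‖ ^ 2 - ‖W t₂ ψ‖ ^ 2 := by
    intro t₁ t₂ h1 h12
    have hsub : Set.Icc t₁ t₂ ⊆ Set.Ici (0 : ℝ) := fun x hx => le_trans h1 hx.1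
    have hcont : ContinuousOn (fun t : ℝ => -‖W t ψ‖ ^ 2) (Set.Icc t₁ t₂) :=
      (hncont.mono hsub).neg
    have hd : ∀ x ∈ Set.Ioo t₁ t₂,
        HasDerivWithinAt (fun t : ℝ => -‖W t ψ‖ ^ 2) (G x) (Set.Ioi x) x := by
      intro x hx
      exact (hf x (le_trans h1 hx.1.le)).mono
        (fun y hy => le_trans (le_trans h1 hx.1.le) hy.le)
    have hint : IntervalIntegrable G volume t₁ t₂ := by
      apply ContinuousOn.intervalIntegrable
      apply hGcont.mono
      rw [Set.uIcc_of_le h12]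
      exact hsub
    have := intervalIntegral.integral_eq_sub_of_hasDeriv_right_of_le h12 hcont hd hint
    rw [this]; ring
  have key : ∀ t₁ t₂ : ℝ, 0 ≤ t₁ → t₁ ≤ t₂ →
      (∫ t in t₁..t₂, ‖j (W t ψ)‖ ^ 2) = ‖W t₁ ψ‖ ^ 2 - ‖W t₂ ψ‖ ^ 2 := by
    intro t₁ t₂ h1 h12
    rw [← keyG t₁ t₂ h1 h12]
    apply intervalIntegral.integral_congr
    intro x hx
    rw [Set.uIcc_of_le h12] at hx
    exact hGeq x (le_trans h1 hx.1)
  refine ⟨key, ?_⟩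
  -- monotonicity of the norm
  have hmono : ∀ s t : ℝ, 0 ≤ s → s ≤ t → ‖W t ψ‖ ≤ ‖W s ψ‖ := by
    intro s t hs hst
    have h1 : W t ψ = W (t - s) (W s ψ) := by
      have := hWsemi (t - s) s (by linarith) hs
      have e : t - s + s = t := by ring
      rw [e] at this
      rw [this]; rfl
    rw [h1]
    exact hWcontr (t - s) (by linarith) _
  -- the limit
  set h : ℝ → ℝ := fun t => ‖W (max t 0) ψ‖ ^ 2 with hhdef
  have hanti : Antitone h := by
    intro a b hab
    have := hmono (max a 0) (max b 0) (le_max_right _ _) (max_le_max hab le_rfl)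
    exact pow_le_pow_left₀ (norm_nonneg _) this 2
  have hbdd : BddBelow (Set.range h) := ⟨0, by rintro x ⟨t, rfl⟩; positivity⟩
  have hLlim : Tendsto h atTop (𝓝 (⨅ t : ℝ, h t)) := tendsto_atTop_ciInf hanti hbdd
  set L : ℝ := ⨅ t : ℝ, h t with hLdef
  have hflim : Tendsto (fun t : ℝ => ‖W t ψ‖ ^ 2) atTop (𝓝 L) := by
    refine hLlim.congr' ?_
    filter_upwards [eventually_ge_atTop (0 : ℝ)] with t ht
    rw [hhdef]; simp [max_eq_left ht]
  have hLnonneg : (0 : ℝ) ≤ L :=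
    ge_of_tendsto' hLlim (fun t => by positivity)
  -- integrability of G on Ioi 0
  have hGint : ∀ T : ℝ, IntegrableOn G (Set.Ioc 0 T) := by
    intro T
    have hsub : Set.Ioc (0 : ℝ) T ⊆ Set.Icc 0 (max T 0) := by
      intro x hx; exact ⟨hx.1.le, le_max_of_le_left hx.2⟩
    refine IntegrableOn.mono_set ?_ hsub
    exact (hGcont.mono (fun x hx => hx.1)).integrableOn_Icc
  have hGtend : Tendsto (fun T : ℝ => ∫ t in (0:ℝ)..T, G t) atTop
      (𝓝 (‖ψ‖ ^ 2 - L)) := by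
    have h1 : Tendsto (fun T : ℝ => ‖ψ‖ ^ 2 - ‖W T ψ‖ ^ 2) atTop (𝓝 (‖ψ‖ ^ 2 - L)) :=
      tendsto_const_nhds.sub hflim
    refine h1.congr' ?_
    filter_upwards [eventually_ge_atTop (0 : ℝ)] with T hT
    rw [keyG 0 T le_rfl hT, hW0ψ]
  have hGintIoi : IntegrableOn G (Set.Ioi (0 : ℝ)) := by
    refine integrableOn_Ioi_of_intervalIntegral_norm_tendsto (‖ψ‖ ^ 2 - L) 0
      (b := fun T : ℝ => T) (l := atTop) hGint tendsto_id ?_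
    refine hGtend.congr' ?_
    filter_upwards [eventually_ge_atTop (0 : ℝ)] with T hT
    apply intervalIntegral.integral_congr
    intro x hx
    rw [Set.uIcc_of_le hT] at hx
    exact (Real.norm_of_nonneg (hGnonneg x hx.1)).symm
  have hGIoi : (∫ t in Set.Ioi (0 : ℝ), G t) = ‖ψ‖ ^ 2 - L :=
    tendsto_nhds_unique
      (intervalIntegral_tendsto_integral_Ioi 0 hGintIoi tendsto_id) hGtend
  have hcongr : (∫ t in Set.Ioi (0 : ℝ), ‖j (W t ψ)‖ ^ 2)
      = ∫ t in Set.Ioi (0 : ℝ), G t := by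
    apply setIntegral_congr_fun measurableSet_Ioi
    intro x hx
    exact hGeq x (le_of_lt hx)
  refine ⟨L, hflim, ?_, ?_⟩
  · rw [hcongr, hGIoi]
  · rw [hcongr, hGIoi]; linarith
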